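/- In the ring ℚ[[q]], let D = q d/dq and let X, X_1, X_2, Y satisfy X_1 = D X and X_2 = D X_1. Suppose the relation D Y = (2/5)(L^5 − 1) + 2(L^5 − 1)X − 2X^2 − 4X_1 + (L^5 − 1)Y − Y^2 − 2XY holds. Then the ℂ[L^{±1}]-subalgebra ℂ[L^{±1}][X, X_1, X_2, Y] of ℚ[[q]] is closed under D, provided additionally D X_2 is expressed by the relation B_4 = −(L^5−1)(10B_3 − 35B_2 + 50B_1 − 24), where B_1 = −5X, B_2 = 25(X_1+X^2), B_3 = −125(X_2 + 3XX_1 + X^3), B_4 = 625(DX_2 + 4XX_2 + 3X_1^2 + 6X^2X_1 + X^4), and D L = (L^6 − L)/5. -/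

import Mathlib

open PowerSeries

/-- Closedness under `D = q·d/dq` of the subalgebra generated by
`L, L⁻¹, 𝒳, 𝒳₁, 𝒳₂, 𝒴` of `ℚ[[q]]`, given the differential relations. -/
theorem formal_quintic_ring_closed_under_D
    (D : PowerSeries ℚ → PowerSeries ℚ)
    (hD : ∀ F, D F = PowerSeries.X * d⁄dX ℚ F)
    (L Linv x x1 x2 y : PowerSeries ℚ)
    (hInv : L * Linv = 1)
    (hDL : 5 * D L = L ^ 6 - L)
    (hx1 : x1 = D x) (hx2 : x2 = D x1)
    (hY : D y = PowerSeries.C (2 / 5 : ℚ) * (L ^ 5 - 1) + 2 * (L ^ 5 - 1) * x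
        - 2 * x ^ 2 - 4 * x1 + (L ^ 5 - 1) * y - y ^ 2 - 2 * x * y)
    (hB4 : 625 * (D x2 + 4 * x * x2 + 3 * x1 ^ 2 + 6 * x ^ 2 * x1 + x ^ 4) =
        -(L ^ 5 - 1) * (10 * (-125 * (x2 + 3 * x * x1 + x ^ 3))
          - 35 * (25 * (x1 + x ^ 2)) + 50 * (-5 * x) - 24)) :
    ∀ F ∈ Algebra.adjoin ℚ ({L, Linv, x, x1, x2, y} : Set (PowerSeries ℚ)),
      D F ∈ Algebra.adjoin ℚ ({L, Linv, x, x1, x2, y} : Set (PowerSeries ℚ)) := by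
  set A := Algebra.adjoin ℚ ({L, Linv, x, x1, x2, y} : Set (PowerSeries ℚ)) with hA
  -- basic derivation properties of D
  have hDadd : ∀ F G, D (F + G) = D F + D G := by
    intro F G; simp [hD, map_add, mul_add]
  have hDmul : ∀ F G, D (F * G) = F * D G + G * D F := by
    intro F G
    simp only [hD, Derivation.leibniz, smul_eq_mul]
    ring
  have hDC : ∀ r : ℚ, D (algebraMap ℚ (PowerSeries ℚ) r) = 0 := by
    intro r; simp [hD]
  -- generators are in A
  have hLmem : L ∈ A := Algebra.subset_adjoin (by simp)
  have hLinvmem : Linv ∈ A := Algebra.subset_adjoin (by simp)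
  have hxmem : x ∈ A := Algebra.subset_adjoin (by simp)
  have hx1mem : x1 ∈ A := Algebra.subset_adjoin (by simp)
  have hx2mem : x2 ∈ A := Algebra.subset_adjoin (by simp)
  have hymem : y ∈ A := Algebra.subset_adjoin (by simp)
  have hCmem : ∀ r : ℚ, (C (R := ℚ) r : PowerSeries ℚ) ∈ A := by
    intro r; rw [PowerSeries.C_eq_algebraMap]; exact A.algebraMap_mem r
  have hlit : ∀ (n : ℕ) [n.AtLeastTwo], (OfNat.ofNat n : PowerSeries ℚ) ∈ A := by
    intro n _; rw [← map_ofNat (C (R := ℚ)) n]; exact hCmem _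
  -- D of each generator is in A
  have h5 : (C (R := ℚ) (1/5) : PowerSeries ℚ) * 5 = 1 := by
    have h5' : (5 : PowerSeries ℚ) = C (R := ℚ) 5 := (map_ofNat (C (R := ℚ)) 5).symm
    rw [h5', ← map_mul]; norm_num
  have hDL' : D L = C (R := ℚ) (1/5) * (L ^ 6 - L) := by
    calc D L = (C (R := ℚ) (1/5) * 5) * D L := by rw [h5, one_mul]
    _ = C (R := ℚ) (1/5) * (5 * D L) := by ring
    _ = _ := by rw [hDL]
  have hDLmem : D L ∈ A := by
    rw [hDL']
    exact mul_mem (hCmem _) (sub_mem (pow_mem hLmem 6) hLmem)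
  have hDLinvmem : D Linv ∈ A := by
    have e1 : L * D Linv + Linv * D L = 0 := by
      rw [← hDmul L Linv, hInv]
      have : (1 : PowerSeries ℚ) = algebraMap ℚ (PowerSeries ℚ) 1 := (map_one (algebraMap ℚ _)).symm
      rw [this, hDC]
    have e2 : D Linv = -(Linv * Linv * D L) := by
      calc D Linv = (Linv * L) * D Linv := by rw [mul_comm Linv L, hInv, one_mul]
      _ = Linv * (L * D Linv) := by ring
      _ = Linv * (-(Linv * D L)) := by rw [eq_neg_of_add_eq_zero_left e1]
      _ = -(Linv * Linv * D L) := by ring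
    rw [e2]
    exact neg_mem (mul_mem (mul_mem hLinvmem hLinvmem) hDLmem)
  have hDxmem : D x ∈ A := hx1 ▸ hx1mem
  have hDx1mem : D x1 ∈ A := hx2 ▸ hx2mem
  have h625 : (C (R := ℚ) (1/625) : PowerSeries ℚ) * 625 = 1 := by
    have h' : (625 : PowerSeries ℚ) = C (R := ℚ) 625 := (map_ofNat (C (R := ℚ)) 625).symm
    rw [h', ← map_mul]; norm_num
  have hDx2' : D x2 = C (R := ℚ) (1/625) * (625 * D x2) := by
    rw [← mul_assoc, h625, one_mul]
  have hDx2mem : D x2 ∈ A := by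
    have e : 625 * D x2 = -(L ^ 5 - 1) * (10 * (-125 * (x2 + 3 * x * x1 + x ^ 3))
          - 35 * (25 * (x1 + x ^ 2)) + 50 * (-5 * x) - 24)
        - 625 * (4 * x * x2 + 3 * x1 ^ 2 + 6 * x ^ 2 * x1 + x ^ 4) := by
      linear_combination hB4
    rw [hDx2', e]
    refine mul_mem (hCmem _) (sub_mem (mul_mem ?_ ?_) ?_)
    · exact neg_mem (sub_mem (pow_mem hLmem 5) (one_mem A))
    · refine sub_mem (add_mem (sub_mem (mul_mem ?_ ?_) ?_) ?_) ?_
      · exact hlit 10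
      · exact mul_mem (neg_mem (hlit 125))
          (add_mem (add_mem hx2mem (mul_mem (mul_mem (hlit 3) hxmem) hx1mem))
            (pow_mem hxmem 3))
      · exact mul_mem (hlit 35)
          (mul_mem (hlit 25) (add_mem hx1mem (pow_mem hxmem 2)))
      · exact mul_mem (hlit 50) (mul_mem (neg_mem (hlit 5)) hxmem)
      · exact hlit 24
    · refine mul_mem (hlit 625) ?_
      refine add_mem (add_mem (add_mem ?_ ?_) ?_) ?_
      · exact mul_mem (mul_mem (hlit 4) hxmem) hx2mem
      · exact mul_mem (hlit 3) (pow_mem hx1mem 2)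
      · exact mul_mem (mul_mem (hlit 6) (pow_mem hxmem 2)) hx1mem
      · exact pow_mem hxmem 4
  have hDymem : D y ∈ A := by
    rw [hY]
    have hL51 : (L ^ 5 - 1 : PowerSeries ℚ) ∈ A := sub_mem (pow_mem hLmem 5) (one_mem A)
    refine sub_mem (sub_mem (add_mem (sub_mem (sub_mem (add_mem ?_ ?_) ?_) ?_) ?_) ?_) ?_
    · exact mul_mem (hCmem _) hL51
    · exact mul_mem (mul_mem (hlit 2) hL51) hxmem
    · exact mul_mem (hlit 2) (pow_mem hxmem 2)
    · exact mul_mem (hlit 4) hx1mem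
    · exact mul_mem hL51 hymem
    · exact pow_mem hymem 2
    · exact mul_mem (mul_mem (hlit 2) hxmem) hymem
  -- main induction
  intro F hF
  induction hF using Algebra.adjoin_induction with
  | mem g hg =>
    simp only [Set.mem_insert_iff, Set.mem_singleton_iff] at hg
    rcases hg with rfl | rfl | rfl | rfl | rfl | rfl
    · exact hDLmem
    · exact hDLinvmem
    · exact hDxmem
    · exact hDx1mem
    · exact hDx2mem
    · exact hDymem
  | algebraMap r => rw [hDC r]; exact zero_mem A
  | add f g _ _ hf hg => rw [hDadd]; exact add_mem hf hg
  | mul f g hfA hgA hf hg =>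
    rw [hDmul]; exact add_mem (mul_mem hfA hg) (mul_mem hgA hf)
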